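/- arXiv:2509.09177 — 3 statements merged into one kernel-verified Lean document; each statement's English description precedes it below -/
import Mathlib

section
/- Let (Ω, P) be a probability space, L : Ω → ℕ a random length, g⋆(l) and g_b(l) vectors in a real inner product space for each l, and q(l) ∈ [0,1]. Set q̄ = E[q(L)] > 0, g⋆ = E[g⋆(L)], g_b = E[q(L)·g_b(L)], and LRE = (1/2)·E[|q(L)/q̄ − 1|]. If ‖g_b(l) − g⋆(l)‖ ≤ η·‖g⋆(l)‖ for all l with η ∈ [0,1), and E[|q(L) − q̄|·‖g⋆(L)‖] ≤ γ·E[|q(L) − q̄|]·E[‖g⋆(L)‖], then ‖g_b − q̄·g⋆‖ ≤ q̄·(2γ(1+η)·LRE + η)·E[‖g⋆(L)‖]. -/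
open MeasureTheory

/-- **Key norm inequality** from the proof of Theorem 2.1: the clipped surrogate update
`g_b = E[q(L) • gb(L)]` deviates from the rescaled true update `q̄ • g⋆` by at most
`q̄·(2γ(1+η)·LRE + η)·E[‖gstar(L)‖]`, under bounded stratification and bounded
correlation, where `LRE = ½·E[|q(L)/q̄ − 1|]`. -/
theorem fspo_norm_inequality
    {Ω : Type*} [MeasurableSpace Ω] (P : Measure Ω) [IsProbabilityMeasure P]
    {E : Type*} [NormedAddCommGroup E] [InnerProductSpace ℝ E] [CompleteSpace E]
    (L : Ω → ℕ) (gstar gb : ℕ → E) (q : ℕ → ℝ)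
    (hq : ∀ l, q l ∈ Set.Icc (0 : ℝ) 1)
    (hint_q : Integrable (fun ω => q (L ω)) P)
    (hint_gstar : Integrable (fun ω => gstar (L ω)) P)
    (hint_gstar_norm : Integrable (fun ω => ‖gstar (L ω)‖) P)
    (hint_gb : Integrable (fun ω => q (L ω) • gb (L ω)) P)
    (qbar : ℝ) (hqbar_def : qbar = ∫ ω, q (L ω) ∂P) (hqbar_pos : 0 < qbar)
    (gS : E) (hgS_def : gS = ∫ ω, gstar (L ω) ∂P)
    (gB : E) (hgB_def : gB = ∫ ω, q (L ω) • gb (L ω) ∂P)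
    (LRE : ℝ) (hLRE_def : LRE = (1 / 2) * ∫ ω, |q (L ω) / qbar - 1| ∂P)
    (η : ℝ) (hη0 : 0 ≤ η) (hη1 : η < 1)
    (hstrat : ∀ l, ‖gb l - gstar l‖ ≤ η * ‖gstar l‖)
    (γ : ℝ)
    (hcorr : ∫ ω, |q (L ω) - qbar| * ‖gstar (L ω)‖ ∂P
        ≤ γ * (∫ ω, |q (L ω) - qbar| ∂P) * ∫ ω, ‖gstar (L ω)‖ ∂P) :
    ‖gB - qbar • gS‖ ≤ qbar * (2 * γ * (1 + η) * LRE + η) * ∫ ω, ‖gstar (L ω)‖ ∂P := by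
  have habs_int : Integrable (fun ω => |q (L ω) - qbar|) P :=
    (hint_q.sub (integrable_const qbar)).abs
  have hprod_int : Integrable (fun ω => |q (L ω) - qbar| * ‖gstar (L ω)‖) P := by
    refine hint_gstar_norm.bdd_mul (c := 1 + |qbar|) habs_int.aestronglyMeasurable
      (Filter.Eventually.of_forall fun ω => ?_)
    have h1 := (hq (L ω)).1
    have h2 := (hq (L ω)).2
    have := abs_sub (q (L ω)) qbar
    rw [Real.norm_eq_abs, abs_abs]
    have : |q (L ω)| ≤ 1 := abs_le.mpr ⟨by linarith, h2⟩
    calc |q (L ω) - qbar| ≤ |q (L ω)| + |qbar| := abs_sub _ _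
      _ ≤ 1 + |qbar| := by linarith
  have hInonneg : 0 ≤ ∫ ω, ‖gstar (L ω)‖ ∂P :=
    integral_nonneg fun ω => norm_nonneg _
  have key : ∀ ω, ‖q (L ω) • gb (L ω) - qbar • gstar (L ω)‖ ≤
      (1 + η) * (|q (L ω) - qbar| * ‖gstar (L ω)‖) + η * qbar * ‖gstar (L ω)‖ := by
    intro ω
    set l := L ω with hl
    have hsplit : q l • gb l - qbar • gstar l
        = q l • (gb l - gstar l) + (q l - qbar) • gstar l := by
      rw [smul_sub, sub_smul]; abel
    have hq0 := (hq l).1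
    have hqa : |q l| ≤ |q l - qbar| + qbar := by
      rw [abs_of_nonneg hq0]
      have := le_abs_self (q l - qbar)
      linarith
    have hb := hstrat l
    have hn : (0:ℝ) ≤ ‖gstar l‖ := norm_nonneg _
    have hbn : (0:ℝ) ≤ ‖gb l - gstar l‖ := norm_nonneg _
    have hc : (0:ℝ) ≤ |q l - qbar| := abs_nonneg _
    have ha : (0:ℝ) ≤ |q l| := abs_nonneg _
    calc ‖q l • gb l - qbar • gstar l‖
        = ‖q l • (gb l - gstar l) + (q l - qbar) • gstar l‖ := by rw [hsplit]
      _ ≤ ‖q l • (gb l - gstar l)‖ + ‖(q l - qbar) • gstar l‖ := norm_add_le _ _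
      _ = |q l| * ‖gb l - gstar l‖ + |q l - qbar| * ‖gstar l‖ := by
          rw [norm_smul, norm_smul, Real.norm_eq_abs, Real.norm_eq_abs]
      _ ≤ (1 + η) * (|q l - qbar| * ‖gstar l‖) + η * qbar * ‖gstar l‖ := by
          nlinarith [mul_le_mul hqa hb hbn (by linarith : (0:ℝ) ≤ |q l - qbar| + qbar),
            mul_nonneg hc hn]
  have hA : ∫ ω, |q (L ω) - qbar| ∂P = 2 * qbar * LRE := by
    rw [hLRE_def]
    have hcg : ∀ ω, |q (L ω) / qbar - 1| = |q (L ω) - qbar| * (1 / qbar) := by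
      intro ω
      have : q (L ω) / qbar - 1 = (q (L ω) - qbar) / qbar := by
        field_simp
      rw [this, abs_div, abs_of_pos hqbar_pos, div_eq_mul_one_div]
    rw [integral_congr_ae (Filter.Eventually.of_forall hcg), integral_mul_const]
    field_simp
  calc ‖gB - qbar • gS‖
      = ‖∫ ω, (q (L ω) • gb (L ω) - qbar • gstar (L ω)) ∂P‖ := by
        have hsm : qbar • gS = ∫ ω, qbar • gstar (L ω) ∂P := by
          rw [hgS_def, integral_smul]
        have hint2 : Integrable (fun ω => qbar • gstar (L ω)) P := hint_gstar.smul qbar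
        rw [hgB_def, hsm, ← integral_sub hint_gb hint2]
    _ ≤ ∫ ω, ‖q (L ω) • gb (L ω) - qbar • gstar (L ω)‖ ∂P :=
        norm_integral_le_integral_norm _
    _ ≤ ∫ ω, ((1 + η) * (|q (L ω) - qbar| * ‖gstar (L ω)‖)
          + η * qbar * ‖gstar (L ω)‖) ∂P := by
        refine integral_mono_of_nonneg (Filter.Eventually.of_forall fun ω => norm_nonneg _)
          ((hprod_int.const_mul _).add (hint_gstar_norm.const_mul _))
          (Filter.Eventually.of_forall key)
    _ = (1 + η) * (∫ ω, |q (L ω) - qbar| * ‖gstar (L ω)‖ ∂P)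
          + η * qbar * ∫ ω, ‖gstar (L ω)‖ ∂P := by
        rw [integral_add (hprod_int.const_mul _) (hint_gstar_norm.const_mul _),
          integral_const_mul, integral_const_mul]
    _ ≤ (1 + η) * (γ * (∫ ω, |q (L ω) - qbar| ∂P) * ∫ ω, ‖gstar (L ω)‖ ∂P)
          + η * qbar * ∫ ω, ‖gstar (L ω)‖ ∂P := by
        have := mul_le_mul_of_nonneg_left hcorr (by linarith : (0:ℝ) ≤ 1 + η)
        linarith
    _ = qbar * (2 * γ * (1 + η) * LRE + η) * ∫ ω, ‖gstar (L ω)‖ ∂P := by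
        rw [hA]; ring
end

section
/- Let (Ω, P) be a probability space, L : Ω → ℕ a random length, g⋆(l) and g_b(l) vectors in a real inner product space, and q(l) ∈ [0,1] with q̄ = E[q(L)] > 0. Set g⋆ = E[g⋆(L)] ≠ 0, g_b = E[q(L)·g_b(L)], κ = E[‖g⋆(L)‖]/‖g⋆‖, LRE = (1/2)·E[|q(L)/q̄ − 1|], and ρ = κ·(η + 2γ(1+η)·LRE). Under the bounded-stratification assumption (‖g_b(l) − g⋆(l)‖ ≤ η·‖g⋆(l)‖ for all l, η ∈ [0,1)) and the bounded-correlation assumption (E[|q(L) − q̄|·‖g⋆(L)‖] ≤ γ·E[|q(L) − q̄|]·E[‖g⋆(L)‖]), if ρ < 1 then ‖g_b‖ ≥ (1 − ρ)·q̄·‖g⋆‖ > 0; in particular the clipped surrogate update g_b does not vanish. -/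
open MeasureTheory

/-- **Non-vanishing of the clipped update** (consequence of the norm inequality in the
proof of Theorem 2.1): under bounded stratification and bounded correlation, with
`ρ = κ(η + 2γ(1+η)·LRE)`, if `ρ < 1` then `‖g_b‖ ≥ (1 − ρ)·q̄·‖g⋆‖ > 0`;
in particular the clipped surrogate update `g_b` does not vanish. -/
theorem fspo_clipped_update_nonvanishing
    {Ω : Type*} [MeasurableSpace Ω] (P : Measure Ω) [IsProbabilityMeasure P]
    {E : Type*} [NormedAddCommGroup E] [InnerProductSpace ℝ E] [CompleteSpace E]
    (L : Ω → ℕ) (gstar gb : ℕ → E) (q : ℕ → ℝ)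
    (hq : ∀ l, q l ∈ Set.Icc (0 : ℝ) 1)
    (hint_q : Integrable (fun ω => q (L ω)) P)
    (hint_gstar : Integrable (fun ω => gstar (L ω)) P)
    (hint_gstar_norm : Integrable (fun ω => ‖gstar (L ω)‖) P)
    (hint_gb : Integrable (fun ω => q (L ω) • gb (L ω)) P)
    (qbar : ℝ) (hqbar_def : qbar = ∫ ω, q (L ω) ∂P) (hqbar_pos : 0 < qbar)
    (gS : E) (hgS_def : gS = ∫ ω, gstar (L ω) ∂P) (hgS_ne : gS ≠ 0)
    (gB : E) (hgB_def : gB = ∫ ω, q (L ω) • gb (L ω) ∂P)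
    (κ : ℝ) (hκ_def : κ = (∫ ω, ‖gstar (L ω)‖ ∂P) / ‖gS‖)
    (LRE : ℝ) (hLRE_def : LRE = (1 / 2) * ∫ ω, |q (L ω) / qbar - 1| ∂P)
    (η : ℝ) (hη0 : 0 ≤ η) (hη1 : η < 1)
    (hstrat : ∀ l, ‖gb l - gstar l‖ ≤ η * ‖gstar l‖)
    (γ : ℝ) (hγ : 0 ≤ γ)
    (hcorr : ∫ ω, |q (L ω) - qbar| * ‖gstar (L ω)‖ ∂P
        ≤ γ * (∫ ω, |q (L ω) - qbar| ∂P) * ∫ ω, ‖gstar (L ω)‖ ∂P)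
    (ρ : ℝ) (hρ_def : ρ = κ * (η + 2 * γ * (1 + η) * LRE))
    (hρ_lt : ρ < 1) :
    (1 - ρ) * qbar * ‖gS‖ ≤ ‖gB‖ ∧ 0 < (1 - ρ) * qbar * ‖gS‖ ∧ gB ≠ 0 := by
  
  have hgSnorm : (0:ℝ) < ‖gS‖ := norm_pos_iff.mpr hgS_ne
  set I := ∫ ω, ‖gstar (L ω)‖ ∂P with hI
  have hI0 : 0 ≤ I := integral_nonneg fun ω => norm_nonneg _
  have hκI : I = κ * ‖gS‖ := by
    rw [hκ_def]; field_simp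
  have hqm : AEStronglyMeasurable (fun ω => q (L ω)) P := hint_q.1
  have hqbar1 : qbar ≤ 1 := by
    rw [hqbar_def]
    calc ∫ ω, q (L ω) ∂P ≤ ∫ _ω, (1:ℝ) ∂P :=
          integral_mono hint_q (integrable_const 1) (fun ω => (hq (L ω)).2)
      _ = 1 := by simp
  have hint_qsub : Integrable (fun ω => q (L ω) - qbar) P :=
    hint_q.sub (integrable_const qbar)
  have hint_absq : Integrable (fun ω => |q (L ω) - qbar|) P := hint_qsub.abs
  set J := ∫ ω, |q (L ω) - qbar| ∂P with hJdef
  have hJ : J = 2 * qbar * LRE := by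
    have hpt : ∀ ω, |q (L ω) / qbar - 1| = |q (L ω) - qbar| / qbar := by
      intro ω
      rw [show q (L ω) / qbar - 1 = (q (L ω) - qbar) / qbar by field_simp,
        abs_div, abs_of_pos hqbar_pos]
    rw [hLRE_def]
    simp only [hpt]
    rw [integral_div]
    field_simp [hJdef]
    exact hJdef
  -- integrability facts
  have int_qgstar : Integrable (fun ω => q (L ω) • gstar (L ω)) P := by
    refine Integrable.mono hint_gstar (hqm.smul hint_gstar.1) (ae_of_all _ fun ω => ?_)
    rw [norm_smul, Real.norm_eq_abs, abs_of_nonneg (hq (L ω)).1]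
    exact mul_le_of_le_one_left (norm_nonneg _) (hq (L ω)).2
  have int_qdiff : Integrable (fun ω => q (L ω) • (gb (L ω) - gstar (L ω))) P := by
    have := hint_gb.sub int_qgstar
    simpa [smul_sub, Pi.sub_def] using this
  have int_qbgstar : Integrable (fun ω => qbar • gstar (L ω)) P := hint_gstar.smul qbar
  have int_qsub_gstar : Integrable (fun ω => (q (L ω) - qbar) • gstar (L ω)) P := by
    have := int_qgstar.sub int_qbgstar
    simpa [sub_smul, Pi.sub_def] using this
  have int_absq_gstar : Integrable (fun ω => |q (L ω) - qbar| * ‖gstar (L ω)‖) P := by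
    refine Integrable.mono hint_gstar_norm (hint_absq.1.mul hint_gstar_norm.1)
      (ae_of_all _ fun ω => ?_)
    have h1 : |q (L ω) - qbar| ≤ 1 := by
      have := hq (L ω); rw [abs_le]; constructor <;> [linarith [this.1]; linarith [this.2]]
    have := norm_nonneg (gstar (L ω))
    rw [Real.norm_eq_abs, Real.norm_eq_abs, abs_of_nonneg (by positivity : (0:ℝ) ≤ |q (L ω) - qbar| * ‖gstar (L ω)‖), abs_of_nonneg this]
    nlinarith [abs_nonneg (q (L ω) - qbar)]
  -- decomposition
  have hdecomp : gB - qbar • gS =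
      (∫ ω, q (L ω) • (gb (L ω) - gstar (L ω)) ∂P)
        + ∫ ω, (q (L ω) - qbar) • gstar (L ω) ∂P := by
    rw [hgB_def, hgS_def, ← integral_smul,
      ← integral_add int_qdiff int_qsub_gstar, ← integral_sub hint_gb int_qbgstar]
    congr 1
    funext ω
    module
  -- bound on the first integral
  have hA : ‖∫ ω, q (L ω) • (gb (L ω) - gstar (L ω)) ∂P‖
      ≤ η * (∫ ω, |q (L ω) - qbar| * ‖gstar (L ω)‖ ∂P) + η * qbar * I := by
    calc ‖∫ ω, q (L ω) • (gb (L ω) - gstar (L ω)) ∂P‖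
        ≤ ∫ ω, ‖q (L ω) • (gb (L ω) - gstar (L ω))‖ ∂P :=
          norm_integral_le_integral_norm _
      _ ≤ ∫ ω, (η * (|q (L ω) - qbar| * ‖gstar (L ω)‖) + η * qbar * ‖gstar (L ω)‖) ∂P := by
          refine integral_mono int_qdiff.norm
            (((int_absq_gstar.const_mul η)).add (hint_gstar_norm.const_mul (η * qbar)))
            (fun ω => ?_)
          rw [norm_smul, Real.norm_eq_abs, abs_of_nonneg (hq (L ω)).1]
          have hb := hstrat (L ω)
          have hqle : q (L ω) ≤ |q (L ω) - qbar| + qbar := by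
            have := abs_sub_abs_le_abs_sub (q (L ω)) qbar
            rw [abs_of_nonneg (hq (L ω)).1, abs_of_pos hqbar_pos] at this
            linarith
          have h0 := (hq (L ω)).1
          have h1 := norm_nonneg (gstar (L ω))
          have h2 := norm_nonneg (gb (L ω) - gstar (L ω))
          nlinarith [abs_nonneg (q (L ω) - qbar)]
      _ = η * (∫ ω, |q (L ω) - qbar| * ‖gstar (L ω)‖ ∂P) + η * qbar * I := by
          rw [integral_add ((int_absq_gstar.const_mul η)) (hint_gstar_norm.const_mul (η * qbar)),
            integral_const_mul, integral_const_mul]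
  -- bound on the second integral
  have hB : ‖∫ ω, (q (L ω) - qbar) • gstar (L ω) ∂P‖
      ≤ ∫ ω, |q (L ω) - qbar| * ‖gstar (L ω)‖ ∂P := by
    calc ‖∫ ω, (q (L ω) - qbar) • gstar (L ω) ∂P‖
        ≤ ∫ ω, ‖(q (L ω) - qbar) • gstar (L ω)‖ ∂P := norm_integral_le_integral_norm _
      _ = ∫ ω, |q (L ω) - qbar| * ‖gstar (L ω)‖ ∂P := by
          congr 1; funext ω; rw [norm_smul, Real.norm_eq_abs]
  -- main norm bound
  have hmain : ‖gB - qbar • gS‖ ≤ ρ * qbar * ‖gS‖ := by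
    have htri : ‖gB - qbar • gS‖
        ≤ η * (∫ ω, |q (L ω) - qbar| * ‖gstar (L ω)‖ ∂P) + η * qbar * I
          + ∫ ω, |q (L ω) - qbar| * ‖gstar (L ω)‖ ∂P := by
      rw [hdecomp]
      exact le_trans (norm_add_le _ _) (by linarith)
    have hcc : ∫ ω, |q (L ω) - qbar| * ‖gstar (L ω)‖ ∂P ≤ γ * J * I := hcorr
    have hrw : ρ * qbar * ‖gS‖ = qbar * I * (η + 2 * γ * (1 + η) * LRE) := by
      rw [hρ_def, hκI]; ring
    rw [hrw]
    have h1η : (0:ℝ) ≤ 1 + η := by linarith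
    have h2 : (1 + η) * (∫ ω, |q (L ω) - qbar| * ‖gstar (L ω)‖ ∂P) ≤ (1 + η) * (γ * J * I) :=
      mul_le_mul_of_nonneg_left hcc h1η
    have h3 : qbar * I * (η + 2 * γ * (1 + η) * LRE) = η * qbar * I + (1 + η) * (γ * J * I) := by
      rw [hJ]; ring
    have h4 : η * (∫ ω, |q (L ω) - qbar| * ‖gstar (L ω)‖ ∂P) + η * qbar * I
        + (∫ ω, |q (L ω) - qbar| * ‖gstar (L ω)‖ ∂P)
        = (1 + η) * (∫ ω, |q (L ω) - qbar| * ‖gstar (L ω)‖ ∂P) + η * qbar * I := by ring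
    linarith
  have hqgS : ‖qbar • gS‖ = qbar * ‖gS‖ := by
    rw [norm_smul, Real.norm_eq_abs, abs_of_pos hqbar_pos]
  have hlow : (1 - ρ) * qbar * ‖gS‖ ≤ ‖gB‖ := by
    have := norm_sub_norm_le (qbar • gS) gB
    rw [hqgS] at this
    have h2 : ‖qbar • gS - gB‖ = ‖gB - qbar • gS‖ := norm_sub_rev _ _
    rw [h2] at this
    nlinarith
  have hpos : 0 < (1 - ρ) * qbar * ‖gS‖ := by
    have : 0 < 1 - ρ := by linarith
    positivity
  refine ⟨hlow, hpos, fun h => ?_⟩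
  rw [h, norm_zero] at hlow
  linarith
end

section
/- Let S and A be finite nonempty types (states and actions), let P(·|s,a) be a transition kernel giving a probability mass function on S for each state–action pair, let r : S × A → ℝ be a reward function, let ρ be an initial state distribution, and let γ ∈ [0,1) be a discount factor. For a stationary policy π (a probability mass function on A for each state), let J(π) = E_{τ∼π}[Σ_{t≥0} γᵗ·r(s_t, a_t)] denote the expected discounted return of the trajectory distribution induced by ρ, π, and P, and let A^π(s,a) = Q^π(s,a) − V^π(s) denote the advantage function of π. Then for any two stationary policies π and π′: J(π) − J(π′) = E_{τ∼π}[ Σ_{t≥0} γᵗ·A^{π′}(s_t, a_t) ], where the trajectory τ is drawn by following π. -/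
/-- One step of the state-distribution evolution: starting from state distribution `d`,
act with policy `pol` and transition with kernel `Pk`. -/
noncomputable def stepDist {S A : Type*} [Fintype S] [Fintype A]
    (Pk : S → A → S → ℝ) (pol : S → A → ℝ) (d : S → ℝ) : S → ℝ :=
  fun s' => ∑ s, ∑ a, d s * pol s a * Pk s a s'

/-- The state distribution at time `t` of the trajectory induced by the initial
distribution `ρ`, the policy `pol` and the transition kernel `Pk`. -/
noncomputable def stateDist {S A : Type*} [Fintype S] [Fintype A]
    (Pk : S → A → S → ℝ) (pol : S → A → ℝ) (ρ : S → ℝ) (t : ℕ) : S → ℝ :=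
  (stepDist Pk pol)^[t] ρ

/-- The expected discounted return `J(π) = E_{τ∼π}[Σ_{t≥0} γᵗ·r(s_t, a_t)]` of the
trajectory distribution induced by `ρ`, `pol` and `Pk`. -/
noncomputable def expReturn {S A : Type*} [Fintype S] [Fintype A]
    (Pk : S → A → S → ℝ) (r : S → A → ℝ) (γ : ℝ) (pol : S → A → ℝ) (ρ : S → ℝ) : ℝ :=
  ∑' t : ℕ, γ ^ t * ∑ s, ∑ a, stateDist Pk pol ρ t s * pol s a * r s a

/-- The state value function `V^π(s)`: expected discounted return starting from `s`. -/
noncomputable def vFun {S A : Type*} [Fintype S] [Fintype A] [DecidableEq S]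
    (Pk : S → A → S → ℝ) (r : S → A → ℝ) (γ : ℝ) (pol : S → A → ℝ) (s : S) : ℝ :=
  expReturn Pk r γ pol (fun s0 => if s0 = s then 1 else 0)

/-- The state–action value function `Q^π(s,a)`. -/
noncomputable def qFun {S A : Type*} [Fintype S] [Fintype A] [DecidableEq S]
    (Pk : S → A → S → ℝ) (r : S → A → ℝ) (γ : ℝ) (pol : S → A → ℝ) (s : S) (a : A) : ℝ :=
  r s a + γ * ∑ s', Pk s a s' * vFun Pk r γ pol s'

/-- The advantage function `A^π(s,a) = Q^π(s,a) − V^π(s)`. -/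
noncomputable def advFun {S A : Type*} [Fintype S] [Fintype A] [DecidableEq S]
    (Pk : S → A → S → ℝ) (r : S → A → ℝ) (γ : ℝ) (pol : S → A → ℝ) (s : S) (a : A) : ℝ :=
  qFun Pk r γ pol s a - vFun Pk r γ pol s

section PDAux
variable {S A : Type*} [Fintype S] [Fintype A]
open Finset

lemma stateDist_zero (Pk : S → A → S → ℝ) (pol : S → A → ℝ) (ρ : S → ℝ) :
    stateDist Pk pol ρ 0 = ρ := rfl

lemma stateDist_succ (Pk : S → A → S → ℝ) (pol : S → A → ℝ) (ρ : S → ℝ) (t : ℕ) :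
    stateDist Pk pol ρ (t + 1) = stepDist Pk pol (stateDist Pk pol ρ t) := by
  simp [stateDist, Function.iterate_succ_apply']

lemma stateDist_nonneg (Pk : S → A → S → ℝ) (hPk0 : ∀ s a s', 0 ≤ Pk s a s')
    (pol : S → A → ℝ) (hpol0 : ∀ s a, 0 ≤ pol s a)
    (ρ : S → ℝ) (hρ0 : ∀ s, 0 ≤ ρ s) (t : ℕ) (s : S) :
    0 ≤ stateDist Pk pol ρ t s := by
  induction t generalizing s with
  | zero => exact hρ0 s
  | succ t ih =>
    rw [stateDist_succ]
    exact Finset.sum_nonneg fun x _ => Finset.sum_nonneg fun a _ =>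
      mul_nonneg (mul_nonneg (ih x) (hpol0 x a)) (hPk0 x a s)

lemma stateDist_sum_one (Pk : S → A → S → ℝ) (hPk1 : ∀ s a, ∑ s', Pk s a s' = 1)
    (pol : S → A → ℝ) (hpol1 : ∀ s, ∑ a, pol s a = 1)
    (ρ : S → ℝ) (hρ1 : ∑ s, ρ s = 1) (t : ℕ) :
    ∑ s, stateDist Pk pol ρ t s = 1 := by
  induction t with
  | zero => exact hρ1
  | succ t ih =>
    simp only [stateDist_succ, stepDist]
    rw [Finset.sum_comm]
    calc ∑ s, ∑ s', ∑ a, stateDist Pk pol ρ t s * pol s a * Pk s a s'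
        = ∑ s, ∑ a, ∑ s', stateDist Pk pol ρ t s * pol s a * Pk s a s' :=
          Finset.sum_congr rfl fun s _ => Finset.sum_comm
      _ = ∑ s, ∑ a, stateDist Pk pol ρ t s * pol s a := by
          refine Finset.sum_congr rfl fun s _ => Finset.sum_congr rfl fun a _ => ?_
          rw [← Finset.mul_sum, hPk1, mul_one]
      _ = ∑ s, stateDist Pk pol ρ t s :=
          Finset.sum_congr rfl fun s _ => by rw [← Finset.mul_sum, hpol1, mul_one]
      _ = 1 := ih

lemma stateDist_linear [DecidableEq S] (Pk : S → A → S → ℝ) (pol : S → A → ℝ)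
    (ρ : S → ℝ) (t : ℕ) (s : S) :
    stateDist Pk pol ρ t s
      = ∑ s0, ρ s0 * stateDist Pk pol (fun x => if x = s0 then 1 else 0) t s := by
  induction t generalizing s with
  | zero => simp [stateDist_zero, mul_ite]
  | succ t ih =>
    simp only [stateDist_succ, stepDist]
    calc ∑ s0, ∑ a, stateDist Pk pol ρ t s0 * pol s0 a * Pk s0 a s
        = ∑ s0, ∑ a, ∑ x, ρ x *
            (stateDist Pk pol (fun y => if y = x then 1 else 0) t s0 * pol s0 a * Pk s0 a s) := by
          refine Finset.sum_congr rfl fun s0 _ => Finset.sum_congr rfl fun a _ => ?_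
          rw [ih s0]
          simp only [Finset.sum_mul]
          exact Finset.sum_congr rfl fun x _ => by ring
      _ = ∑ x, ∑ s0, ∑ a, ρ x *
            (stateDist Pk pol (fun y => if y = x then 1 else 0) t s0 * pol s0 a * Pk s0 a s) := by
          exact (Finset.sum_congr rfl fun s0 _ => Finset.sum_comm).trans Finset.sum_comm
      _ = ∑ x, ρ x * ∑ s0, ∑ a,
            stateDist Pk pol (fun y => if y = x then 1 else 0) t s0 * pol s0 a * Pk s0 a s := by
          refine Finset.sum_congr rfl fun x _ => ?_
          rw [Finset.mul_sum]
          exact Finset.sum_congr rfl fun s0 _ => by rw [Finset.mul_sum]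

lemma summable_aux (γ : ℝ) (hγ0 : 0 ≤ γ) (hγ1 : γ < 1) (x : ℕ → ℝ) (C : ℝ)
    (hC : ∀ t, |x t| ≤ C) : Summable (fun t => γ ^ t * x t) := by
  refine Summable.of_norm_bounded (g := fun t => C * γ ^ t)
    ((summable_geometric_of_lt_one hγ0 hγ1).mul_left C) fun t => ?_
  rw [Real.norm_eq_abs, abs_mul, abs_pow, abs_of_nonneg hγ0, mul_comm]
  exact mul_le_mul_of_nonneg_right (hC t) (pow_nonneg hγ0 t)

lemma sum_bound (d : S → ℝ) (hd0 : ∀ s, 0 ≤ d s) (hd1 : ∑ s, d s = 1)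
    (π : S → A → ℝ) (hπ0 : ∀ s a, 0 ≤ π s a) (hπ1 : ∀ s, ∑ a, π s a = 1)
    (f : S → A → ℝ) (C : ℝ) (hC : ∀ s a, |f s a| ≤ C) :
    |∑ s, ∑ a, d s * π s a * f s a| ≤ C := by
  calc |∑ s, ∑ a, d s * π s a * f s a|
      ≤ ∑ s, ∑ a, |d s * π s a * f s a| := by
        refine (Finset.abs_sum_le_sum_abs _ _).trans ?_
        exact Finset.sum_le_sum fun s _ => Finset.abs_sum_le_sum_abs _ _
    _ ≤ ∑ s, ∑ a, d s * π s a * C := by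
        refine Finset.sum_le_sum fun s _ => Finset.sum_le_sum fun a _ => ?_
        rw [abs_mul, abs_of_nonneg (mul_nonneg (hd0 s) (hπ0 s a))]
        exact mul_le_mul_of_nonneg_left (hC s a) (mul_nonneg (hd0 s) (hπ0 s a))
    _ = ∑ s, d s * C := by
        refine Finset.sum_congr rfl fun s _ => ?_
        calc ∑ a, d s * π s a * C = ∑ a, d s * C * π s a :=
              Finset.sum_congr rfl fun a _ => by ring
          _ = d s * C := by rw [← Finset.mul_sum, hπ1, mul_one]
    _ = C := by rw [← Finset.sum_mul, hd1, one_mul]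



lemma sum_comm3 {β γ' δ : Type*} [Fintype β] [Fintype γ'] [Fintype δ] (F : β → γ' → δ → ℝ) :
    ∑ x, ∑ y, ∑ z, F x y z = ∑ z, ∑ x, ∑ y, F x y z :=
  (Finset.sum_congr rfl fun _ _ => Finset.sum_comm).trans Finset.sum_comm

lemma expReturn_linear [DecidableEq S]
    (Pk : S → A → S → ℝ) (hPk0 : ∀ s a s', 0 ≤ Pk s a s') (hPk1 : ∀ s a, ∑ s', Pk s a s' = 1)
    (r : S → A → ℝ) (γ : ℝ) (hγ0 : 0 ≤ γ) (hγ1 : γ < 1)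
    (pol : S → A → ℝ) (hpol0 : ∀ s a, 0 ≤ pol s a) (hpol1 : ∀ s, ∑ a, pol s a = 1)
    (ρ : S → ℝ) (hρ0 : ∀ s, 0 ≤ ρ s) (hρ1 : ∑ s, ρ s = 1) :
    expReturn Pk r γ pol ρ = ∑ s0, ρ s0 * vFun Pk r γ pol s0 := by
  classical
  set C := ∑ s, ∑ a, |r s a| with hC
  have hrC : ∀ s a, |r s a| ≤ C := fun s a =>
    le_trans (Finset.single_le_sum (f := fun a' => |r s a'|)
        (fun _ _ => abs_nonneg _) (Finset.mem_univ a))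
      (Finset.single_le_sum (f := fun s' => ∑ a', |r s' a'|)
        (fun _ _ => Finset.sum_nonneg fun _ _ => abs_nonneg _) (Finset.mem_univ s))
  have hδ0 : ∀ s0 x : S, (0:ℝ) ≤ if x = s0 then 1 else 0 := by
    intro s0 x; split <;> norm_num
  have hδ1 : ∀ s0 : S, ∑ x, (if x = s0 then (1:ℝ) else 0) = 1 := fun s0 => by simp
  have key : ∀ t, γ ^ t * ∑ s, ∑ a, stateDist Pk pol ρ t s * pol s a * r s a
      = ∑ s0, ρ s0 * (γ ^ t * ∑ s, ∑ a,
          stateDist Pk pol (fun x => if x = s0 then 1 else 0) t s * pol s a * r s a) := by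
    intro t
    have h1 : ∑ s, ∑ a, stateDist Pk pol ρ t s * pol s a * r s a
        = ∑ s0, ρ s0 * ∑ s, ∑ a,
            stateDist Pk pol (fun x => if x = s0 then 1 else 0) t s * pol s a * r s a := by
      calc ∑ s, ∑ a, stateDist Pk pol ρ t s * pol s a * r s a
          = ∑ s, ∑ a, ∑ s0, ρ s0 *
              (stateDist Pk pol (fun x => if x = s0 then 1 else 0) t s * pol s a * r s a) := by
            refine Finset.sum_congr rfl fun s _ => Finset.sum_congr rfl fun a _ => ?_
            rw [stateDist_linear Pk pol ρ t s]
            simp only [Finset.sum_mul]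
            exact Finset.sum_congr rfl fun s0 _ => by ring
        _ = ∑ s0, ∑ s, ∑ a, ρ s0 *
              (stateDist Pk pol (fun x => if x = s0 then 1 else 0) t s * pol s a * r s a) :=
            sum_comm3 _
        _ = ∑ s0, ρ s0 * ∑ s, ∑ a,
              stateDist Pk pol (fun x => if x = s0 then 1 else 0) t s * pol s a * r s a := by
            refine Finset.sum_congr rfl fun s0 _ => ?_
            rw [Finset.mul_sum]
            exact Finset.sum_congr rfl fun s _ => by rw [Finset.mul_sum]
    rw [h1, Finset.mul_sum]
    exact Finset.sum_congr rfl fun s0 _ => by ring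
  have hsummable : ∀ s0 : S, Summable (fun t => ρ s0 * (γ ^ t * ∑ s, ∑ a,
      stateDist Pk pol (fun x => if x = s0 then 1 else 0) t s * pol s a * r s a)) := by
    intro s0
    refine Summable.mul_left _ (summable_aux γ hγ0 hγ1 _ C fun t => ?_)
    exact sum_bound _ (stateDist_nonneg Pk hPk0 pol hpol0 _ (hδ0 s0) t)
      (stateDist_sum_one Pk hPk1 pol hpol1 _ (hδ1 s0) t) pol hpol0 hpol1 r C hrC
  calc expReturn Pk r γ pol ρ
      = ∑' t : ℕ, ∑ s0, ρ s0 * (γ ^ t * ∑ s, ∑ a,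
          stateDist Pk pol (fun x => if x = s0 then 1 else 0) t s * pol s a * r s a) :=
        tsum_congr key
    _ = ∑ s0, ∑' t : ℕ, ρ s0 * (γ ^ t * ∑ s, ∑ a,
          stateDist Pk pol (fun x => if x = s0 then 1 else 0) t s * pol s a * r s a) :=
        Summable.tsum_finsetSum fun s0 _ => hsummable s0
    _ = ∑ s0, ρ s0 * vFun Pk r γ pol s0 := by
        refine Finset.sum_congr rfl fun s0 _ => ?_
        rw [tsum_mul_left]
        rfl

end PDAux


/-- **Performance difference identity** (Equation (8), Appendix B of the paper; due to
Kakade–Langford/TRPO): for finite state and action spaces, any transition kernel,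
reward, initial distribution, discount `γ ∈ [0,1)`, and any two stationary policies
`π` and `π′`, `J(π) − J(π′) = E_{τ∼π}[Σ_{t≥0} γᵗ·A^{π′}(s_t, a_t)]`, where the
trajectory `τ` is drawn by following `π`. -/
theorem performance_difference
    {S A : Type*} [Fintype S] [Fintype A] [Nonempty S] [Nonempty A] [DecidableEq S]
    (Pk : S → A → S → ℝ) (hPk0 : ∀ s a s', 0 ≤ Pk s a s') (hPk1 : ∀ s a, ∑ s', Pk s a s' = 1)
    (r : S → A → ℝ)
    (ρ : S → ℝ) (hρ0 : ∀ s, 0 ≤ ρ s) (hρ1 : ∑ s, ρ s = 1)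
    (γ : ℝ) (hγ0 : 0 ≤ γ) (hγ1 : γ < 1)
    (pol pol' : S → A → ℝ)
    (hpol0 : ∀ s a, 0 ≤ pol s a) (hpol1 : ∀ s, ∑ a, pol s a = 1)
    (hpol'0 : ∀ s a, 0 ≤ pol' s a) (hpol'1 : ∀ s, ∑ a, pol' s a = 1) :
    expReturn Pk r γ pol ρ - expReturn Pk r γ pol' ρ
      = ∑' t : ℕ, γ ^ t * ∑ s, ∑ a,
          stateDist Pk pol ρ t s * pol s a * advFun Pk r γ pol' s a := by
  classical
  set v' : S → ℝ := vFun Pk r γ pol' with hv'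
  set C : ℝ := ∑ s, ∑ a, |r s a| with hCdef
  have hrC : ∀ s a, |r s a| ≤ C := fun s a =>
    le_trans (Finset.single_le_sum (f := fun a' => |r s a'|)
        (fun _ _ => abs_nonneg _) (Finset.mem_univ a))
      (Finset.single_le_sum (f := fun s' => ∑ a', |r s' a'|)
        (fun _ _ => Finset.sum_nonneg fun _ _ => abs_nonneg _) (Finset.mem_univ s))
  have hd0 : ∀ t s, 0 ≤ stateDist Pk pol ρ t s :=
    fun t s => stateDist_nonneg Pk hPk0 pol hpol0 ρ hρ0 t s
  have hd1 : ∀ t, ∑ s, stateDist Pk pol ρ t s = 1 :=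
    fun t => stateDist_sum_one Pk hPk1 pol hpol1 ρ hρ1 t
  set Cv : ℝ := ∑ s, |v' s| with hCv
  -- W t := ∑ s, stateDist Pk pol ρ t s * v' s
  have hWbound : ∀ t, |∑ s, stateDist Pk pol ρ t s * v' s| ≤ Cv := by
    intro t
    refine (Finset.abs_sum_le_sum_abs _ _).trans ?_
    refine (Finset.sum_le_sum fun s _ => ?_).trans (le_of_eq rfl)
    rw [abs_mul, abs_of_nonneg (hd0 t s)]
    have hle1 : stateDist Pk pol ρ t s ≤ 1 :=
      (hd1 t) ▸ Finset.single_le_sum (fun x _ => hd0 t x) (Finset.mem_univ s)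
    exact mul_le_of_le_one_left (abs_nonneg _) hle1
  -- key pointwise identity
  have key : ∀ t, (∑ s, ∑ a, stateDist Pk pol ρ t s * pol s a * advFun Pk r γ pol' s a)
      = (∑ s, ∑ a, stateDist Pk pol ρ t s * pol s a * r s a)
        + γ * (∑ s, stateDist Pk pol ρ (t+1) s * v' s)
        - (∑ s, stateDist Pk pol ρ t s * v' s) := by
    intro t
    have hA : ∑ s, ∑ a, stateDist Pk pol ρ t s * pol s a * (∑ s', Pk s a s' * v' s')
        = ∑ s', stateDist Pk pol ρ (t+1) s' * v' s' := by
      calc ∑ s, ∑ a, stateDist Pk pol ρ t s * pol s a * (∑ s', Pk s a s' * v' s')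
          = ∑ s, ∑ a, ∑ s', stateDist Pk pol ρ t s * pol s a * Pk s a s' * v' s' := by
            refine Finset.sum_congr rfl fun s _ => Finset.sum_congr rfl fun a _ => ?_
            rw [Finset.mul_sum]
            exact Finset.sum_congr rfl fun s' _ => by ring
        _ = ∑ s', ∑ s, ∑ a, stateDist Pk pol ρ t s * pol s a * Pk s a s' * v' s' :=
            sum_comm3 _
        _ = ∑ s', (∑ s, ∑ a, stateDist Pk pol ρ t s * pol s a * Pk s a s') * v' s' := by
            refine Finset.sum_congr rfl fun s' _ => ?_
            rw [Finset.sum_mul]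
            exact Finset.sum_congr rfl fun s _ => by rw [Finset.sum_mul]
        _ = ∑ s', stateDist Pk pol ρ (t+1) s' * v' s' := by
            refine Finset.sum_congr rfl fun s' _ => ?_
            rw [stateDist_succ]
            rfl
    have hB : ∑ s, ∑ a, stateDist Pk pol ρ t s * pol s a * v' s
        = ∑ s, stateDist Pk pol ρ t s * v' s := by
      refine Finset.sum_congr rfl fun s _ => ?_
      calc ∑ a, stateDist Pk pol ρ t s * pol s a * v' s
          = ∑ a, stateDist Pk pol ρ t s * v' s * pol s a :=
            Finset.sum_congr rfl fun a _ => by ring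
        _ = stateDist Pk pol ρ t s * v' s := by rw [← Finset.mul_sum, hpol1, mul_one]
    calc ∑ s, ∑ a, stateDist Pk pol ρ t s * pol s a * advFun Pk r γ pol' s a
        = ∑ s, ∑ a, (stateDist Pk pol ρ t s * pol s a * r s a
            + γ * (stateDist Pk pol ρ t s * pol s a * (∑ s', Pk s a s' * v' s'))
            - stateDist Pk pol ρ t s * pol s a * v' s) := by
          refine Finset.sum_congr rfl fun s _ => Finset.sum_congr rfl fun a _ => ?_
          simp only [advFun, qFun, ← hv']
          ring
      _ = (∑ s, ∑ a, stateDist Pk pol ρ t s * pol s a * r s a)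
            + γ * (∑ s, ∑ a, stateDist Pk pol ρ t s * pol s a * (∑ s', Pk s a s' * v' s'))
            - (∑ s, ∑ a, stateDist Pk pol ρ t s * pol s a * v' s) := by
          simp only [Finset.sum_add_distrib, Finset.sum_sub_distrib, ← Finset.mul_sum]
      _ = (∑ s, ∑ a, stateDist Pk pol ρ t s * pol s a * r s a)
            + γ * (∑ s, stateDist Pk pol ρ (t+1) s * v' s)
            - (∑ s, stateDist Pk pol ρ t s * v' s) := by rw [hA, hB]
  -- summabilities
  have hf : Summable (fun t : ℕ => γ ^ t * ∑ s, ∑ a,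
      stateDist Pk pol ρ t s * pol s a * r s a) :=
    summable_aux γ hγ0 hγ1 _ C fun t =>
      sum_bound _ (hd0 t) (hd1 t) pol hpol0 hpol1 r C hrC
  have hh : Summable (fun t : ℕ => γ ^ t * ∑ s, stateDist Pk pol ρ t s * v' s) :=
    summable_aux γ hγ0 hγ1 _ Cv hWbound
  have hh1 : Summable (fun t : ℕ => γ ^ (t+1) * ∑ s, stateDist Pk pol ρ (t+1) s * v' s) :=
    (summable_nat_add_iff (f := fun t : ℕ => γ ^ t * ∑ s, stateDist Pk pol ρ t s * v' s) 1).2 hh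
  -- the value of J(pol')
  have hJ' : expReturn Pk r γ pol' ρ = ∑ s, ρ s * v' s :=
    expReturn_linear Pk hPk0 hPk1 r γ hγ0 hγ1 pol' hpol'0 hpol'1 ρ hρ0 hρ1
  have hzero : ∑' t : ℕ, γ ^ t * ∑ s, stateDist Pk pol ρ t s * v' s
      = γ ^ 0 * (∑ s, stateDist Pk pol ρ 0 s * v' s)
        + ∑' t : ℕ, γ ^ (t+1) * ∑ s, stateDist Pk pol ρ (t+1) s * v' s :=
    Summable.tsum_eq_zero_add hh
  have main : ∑' t : ℕ, γ ^ t * ∑ s, ∑ a,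
        stateDist Pk pol ρ t s * pol s a * advFun Pk r γ pol' s a
      = expReturn Pk r γ pol ρ - expReturn Pk r γ pol' ρ := by
    have hterm : ∀ t : ℕ, γ ^ t * ∑ s, ∑ a,
          stateDist Pk pol ρ t s * pol s a * advFun Pk r γ pol' s a
        = γ ^ t * (∑ s, ∑ a, stateDist Pk pol ρ t s * pol s a * r s a)
          + (γ ^ (t+1) * (∑ s, stateDist Pk pol ρ (t+1) s * v' s)
            - γ ^ t * (∑ s, stateDist Pk pol ρ t s * v' s)) := by
      intro t
      rw [key t]
      ring
    calc ∑' t : ℕ, γ ^ t * ∑ s, ∑ a,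
          stateDist Pk pol ρ t s * pol s a * advFun Pk r γ pol' s a
        = ∑' t : ℕ, (γ ^ t * (∑ s, ∑ a, stateDist Pk pol ρ t s * pol s a * r s a)
            + (γ ^ (t+1) * (∑ s, stateDist Pk pol ρ (t+1) s * v' s)
              - γ ^ t * (∑ s, stateDist Pk pol ρ t s * v' s))) := tsum_congr hterm
      _ = (∑' t : ℕ, γ ^ t * ∑ s, ∑ a, stateDist Pk pol ρ t s * pol s a * r s a)
            + ∑' t : ℕ, (γ ^ (t+1) * (∑ s, stateDist Pk pol ρ (t+1) s * v' s)
              - γ ^ t * (∑ s, stateDist Pk pol ρ t s * v' s)) := Summable.tsum_add hf (hh1.sub hh)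
      _ = (∑' t : ℕ, γ ^ t * ∑ s, ∑ a, stateDist Pk pol ρ t s * pol s a * r s a)
            + ((∑' t : ℕ, γ ^ (t+1) * (∑ s, stateDist Pk pol ρ (t+1) s * v' s))
              - ∑' t : ℕ, γ ^ t * (∑ s, stateDist Pk pol ρ t s * v' s)) := by
            rw [Summable.tsum_sub hh1 hh]
      _ = expReturn Pk r γ pol ρ - expReturn Pk r γ pol' ρ := by
            have h0eq : γ ^ 0 * (∑ s, stateDist Pk pol ρ 0 s * v' s) = ∑ s, ρ s * v' s := by
              rw [pow_zero, one_mul]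
              simp only [stateDist_zero]
            rw [hJ', expReturn]
            linarith [hzero, h0eq]
  exact main.symm
end
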